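/- Let ‖·‖ be a smooth and strictly convex norm on ℝ³ with unit ball B, let π be a 2-dimensional affine plane, v a unit vector not parallel to π, and Bₜ = B ∩ (π + tv). Let a, b, c ∈ π be affinely independent. For each t with Bₜ having more than one point, let (z(t), r(t)) be the unique pair with z(t) ∈ π, r(t) > 0 and ‖z(t) + r(t)a + tv‖ = ‖z(t) + r(t)b + tv‖ = ‖z(t) + r(t)c + tv‖ = 1. Then the map t ↦ (z(t), r(t)) is continuous on the open interval (t₁, t₂) where Bₜ has more than one point. -/

import Mathlib

def IsNorm {n : ℕ} (N : (Fin n → ℝ) → ℝ) : Prop :=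
  (∀ x, 0 ≤ N x) ∧ (∀ x, N x = 0 ↔ x = 0) ∧
    (∀ (a : ℝ) x, N (a • x) = |a| * N x) ∧ ∀ x y, N (x + y) ≤ N x + N y

def IsSmoothNorm {n : ℕ} (N : (Fin n → ℝ) → ℝ) : Prop :=
  ∀ x, N x = 1 → ∃! f : (Fin n → ℝ) →ₗ[ℝ] ℝ, f x = 1 ∧ ∀ y, N y ≤ 1 → f y ≤ 1

def IsStrictlyConvexNorm {n : ℕ} (N : (Fin n → ℝ) → ℝ) : Prop :=
  ∀ x y, N x = 1 → N y = 1 → x ≠ y → N ((1 / 2 : ℝ) • (x + y)) < 1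

namespace Aux

lemma norm_upper {N : (Fin 3 → ℝ) → ℝ} (hN : IsNorm N) :
    ∃ C > 0, ∀ x, N x ≤ C * ‖x‖ := by
  obtain ⟨hpos, hzero, hhom, htri⟩ := hN
  set e : Fin 3 → (Fin 3 → ℝ) := fun i j => if i = j then 1 else 0 with he
  have hp0 := hpos (e 0); have hp1 := hpos (e 1); have hp2 := hpos (e 2)
  refine ⟨N (e 0) + N (e 1) + N (e 2) + 1, by linarith, fun x => ?_⟩
  have hx : x = x 0 • e 0 + x 1 • e 1 + x 2 • e 2 := by
    funext j; fin_cases j <;> simp [he]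
  have h1 : N x ≤ |x 0| * N (e 0) + |x 1| * N (e 1) + |x 2| * N (e 2) := by
    calc N x = N (x 0 • e 0 + x 1 • e 1 + x 2 • e 2) := by rw [← hx]
    _ ≤ N (x 0 • e 0 + x 1 • e 1) + N (x 2 • e 2) := htri _ _
    _ ≤ N (x 0 • e 0) + N (x 1 • e 1) + N (x 2 • e 2) :=
        by linarith [htri (x 0 • e 0) (x 1 • e 1)]
    _ = _ := by rw [hhom, hhom, hhom]
  have habs : ∀ i, |x i| ≤ ‖x‖ := fun i => by
    simpa using norm_le_pi_norm x i
  have h2 : ∀ i, |x i| * N (e i) ≤ ‖x‖ * N (e i) := fun i =>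
    mul_le_mul_of_nonneg_right (habs i) (hpos _)
  calc N x ≤ ‖x‖ * N (e 0) + ‖x‖ * N (e 1) + ‖x‖ * N (e 2) :=
      h1.trans (by have := h2 0; have := h2 1; have := h2 2; linarith)
  _ ≤ (N (e 0) + N (e 1) + N (e 2) + 1) * ‖x‖ := by
      have : (0:ℝ) ≤ ‖x‖ := norm_nonneg x
      nlinarith [hpos (e 0), hpos (e 1), hpos (e 2)]

lemma norm_cont {N : (Fin 3 → ℝ) → ℝ} (hN : IsNorm N) : Continuous N := by
  obtain ⟨C, hC0, hC⟩ := norm_upper hN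
  obtain ⟨hpos, hzero, hhom, htri⟩ := hN
  have key : ∀ x y : Fin 3 → ℝ, N x - N y ≤ C * ‖x - y‖ := by
    intro x y
    have : N x ≤ N (x - y) + N y := by
      have := htri (x - y) y; simpa using this
    have h2 := hC (x - y)
    linarith
  apply (LipschitzWith.of_dist_le_mul (K := Real.toNNReal C) (f := N) ?_).continuous
  intro x y
  rw [Real.dist_eq, Real.coe_toNNReal _ hC0.le, dist_eq_norm]
  rw [abs_sub_le_iff]
  constructor
  · exact key x y
  · have := key y x; rwa [norm_sub_rev] at this

lemma norm_lower {N : (Fin 3 → ℝ) → ℝ} (hN : IsNorm N) :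
    ∃ c > 0, ∀ x, c * ‖x‖ ≤ N x := by
  have hNc := norm_cont hN
  obtain ⟨hpos, hzero, hhom, htri⟩ := hN
  have hcmp : IsCompact (Metric.sphere (0 : Fin 3 → ℝ) 1) := isCompact_sphere _ _
  have hne : (Metric.sphere (0 : Fin 3 → ℝ) 1).Nonempty :=
    NormedSpace.sphere_nonempty.2 zero_le_one
  obtain ⟨x₀, hx₀s, hx₀min⟩ := hcmp.exists_isMinOn hne hNc.continuousOn
  have hx₀ : ‖x₀‖ = 1 := by simpa using hx₀s
  have hx₀ne : x₀ ≠ 0 := by intro h; rw [h] at hx₀; simp at hx₀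
  have hc0 : 0 < N x₀ := by
    rcases (hpos x₀).lt_or_eq with h | h
    · exact h
    · exact absurd ((hzero x₀).1 h.symm) hx₀ne
  refine ⟨N x₀, hc0, fun x => ?_⟩
  rcases eq_or_ne x 0 with rfl | hx
  · simp [(hzero 0).2 rfl]
  · have hnx : (0:ℝ) < ‖x‖ := norm_pos_iff.2 hx
    have hmem : ‖x‖⁻¹ • x ∈ Metric.sphere (0 : Fin 3 → ℝ) 1 := by
      simp [norm_smul, abs_of_pos (inv_pos.2 hnx), inv_mul_cancel₀ hnx.ne']
    have := hx₀min hmem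
    have h2 : N x₀ ≤ N (‖x‖⁻¹ • x) := this
    rw [hhom, abs_of_pos (inv_pos.2 hnx)] at h2
    calc N x₀ * ‖x‖ ≤ (‖x‖⁻¹ * N x) * ‖x‖ := by nlinarith
    _ = N x := by field_simp

end Aux

namespace Aux2
open Aux


lemma f_le_N {N : (Fin 3 → ℝ) → ℝ} (hN : IsNorm N)
    {f : (Fin 3 → ℝ) →ₗ[ℝ] ℝ} (hf : ∀ y, N y ≤ 1 → f y ≤ 1) :
    ∀ w, f w ≤ N w := by
  obtain ⟨hpos, hzero, hhom, htri⟩ := hN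
  intro w
  rcases eq_or_ne (N w) 0 with h0 | h0
  · have : w = 0 := (hzero w).1 h0
    subst this; rw [map_zero]; exact hpos 0
  · have hw : 0 < N w := (hpos w).lt_of_ne (Ne.symm h0)
    have h1 : N ((N w)⁻¹ • w) ≤ 1 := by
      rw [hhom, abs_of_pos (inv_pos.2 hw), inv_mul_cancel₀ hw.ne']
    have := hf _ h1
    rw [map_smul, smul_eq_mul] at this
    calc f w = N w * ((N w)⁻¹ * f w) := by field_simp
    _ ≤ N w * 1 := mul_le_mul_of_nonneg_left this hw.le
    _ = N w := mul_one _

lemma abs_f_le_N {N : (Fin 3 → ℝ) → ℝ} (hN : IsNorm N)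
    {f : (Fin 3 → ℝ) →ₗ[ℝ] ℝ} (hf : ∀ y, N y ≤ 1 → f y ≤ 1) :
    ∀ w, |f w| ≤ N w := by
  intro w
  rw [abs_le]
  constructor
  · have := f_le_N hN hf (-w)
    rw [map_neg] at this
    have hh : N (-w) = N w := by
      have := hN.2.2.1 (-1) w; simpa using this
    linarith [hh ▸ this]
  · exact f_le_N hN hf w

lemma support_exists {N : (Fin 3 → ℝ) → ℝ} (hN : IsNorm N) (x : Fin 3 → ℝ)
    (hx : N x = 1) :
    ∃ f : (Fin 3 → ℝ) →ₗ[ℝ] ℝ, f x = 1 ∧ ∀ y, N y ≤ 1 → f y ≤ 1 := by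
  have hNc := Aux.norm_cont hN
  obtain ⟨hpos, hzero, hhom, htri⟩ := hN
  set s : Set (Fin 3 → ℝ) := {y | N y < 1} with hs
  have hso : IsOpen s := isOpen_lt hNc continuous_const
  have hsc : Convex ℝ s := by
    intro y hy z hz α β hα hβ hαβ
    have h1 : N (α • y + β • z) ≤ α * N y + β * N z := by
      calc N (α • y + β • z) ≤ N (α • y) + N (β • z) := htri _ _
      _ = α * N y + β * N z := by rw [hhom, hhom, abs_of_nonneg hα, abs_of_nonneg hβ]
    rcases eq_or_lt_of_le hα with h | h
    · have : β = 1 := by linarith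
      simp only [hs, Set.mem_setOf_eq] at hy hz ⊢
      calc N (α • y + β • z) ≤ α * N y + β * N z := h1
      _ = N z := by rw [← h, this]; ring
      _ < 1 := hz
    · simp only [hs, Set.mem_setOf_eq] at hy hz ⊢
      have : α * N y + β * N z < α * 1 + β * 1 := by nlinarith [hpos y, hpos z]
      calc N (α • y + β • z) ≤ α * N y + β * N z := h1
      _ < 1 := by linarith
  have hxs : x ∉ s := by simp [hs, hx]
  obtain ⟨f, hf⟩ := geometric_hahn_banach_open_point hsc hso hxs
  have h0s : (0 : Fin 3 → ℝ) ∈ s := by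
    simp [hs, (hzero 0).2 rfl]
  have hfx : 0 < f x := by
    have := hf 0 h0s; simpa using this
  refine ⟨(f x)⁻¹ • (f : (Fin 3 → ℝ) →ₗ[ℝ] ℝ), ?_, ?_⟩
  · simp [inv_mul_cancel₀ hfx.ne']
  · intro y hy
    simp only [LinearMap.smul_apply, ContinuousLinearMap.coe_coe, smul_eq_mul]
    rw [inv_mul_le_iff₀ hfx, mul_one]
    by_contra hcon
    push_neg at hcon
    have hfy : 0 < f y := hfx.trans hcon
    set θ : ℝ := (f x + f y) / (2 * f y) with hθ
    have hθ0 : 0 < θ := by positivity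
    have hθ1 : θ < 1 := by rw [hθ, div_lt_one (by positivity)]; linarith
    have hmem : θ • y ∈ s := by
      simp only [hs, Set.mem_setOf_eq]
      rw [hhom, abs_of_pos hθ0]
      nlinarith
    have := hf _ hmem
    rw [map_smul, smul_eq_mul] at this
    have : θ * f y = (f x + f y) / 2 := by rw [hθ]; field_simp
    nlinarith [hf _ hmem, map_smul f θ y]
end Aux2

namespace Aux3
open Aux Aux2 Filter Topology

noncomputable def vecToLin (F : Fin 3 → ℝ) : (Fin 3 → ℝ) →ₗ[ℝ] ℝ where
  toFun y := ∑ i, y i * F i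
  map_add' y z := by simp [add_mul, Finset.sum_add_distrib]
  map_smul' s y := by simp [Finset.mul_sum, mul_assoc]

lemma vecToLin_apply (F y : Fin 3 → ℝ) : vecToLin F y = ∑ i, y i * F i := rfl

lemma lin_eq_vecToLin (f : (Fin 3 → ℝ) →ₗ[ℝ] ℝ) (y : Fin 3 → ℝ) :
    f y = vecToLin (fun i => f fun j => if i = j then 1 else 0) y := by
  rw [vecToLin_apply, LinearMap.pi_apply_eq_sum_univ]
  simp [smul_eq_mul]

lemma functional_limit {N : (Fin 3 → ℝ) → ℝ} (hN : IsNorm N)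
    (fn : ℕ → (Fin 3 → ℝ) →ₗ[ℝ] ℝ)
    (hball : ∀ n y, N y ≤ 1 → fn n y ≤ 1) :
    ∃ φ : ℕ → ℕ, StrictMono φ ∧ ∃ f : (Fin 3 → ℝ) →ₗ[ℝ] ℝ,
      (∀ y, N y ≤ 1 → f y ≤ 1) ∧
      ∀ y, Tendsto (fun n => fn (φ n) y) atTop (𝓝 (f y)) := by
  set e : Fin 3 → (Fin 3 → ℝ) := fun i j => if i = j then 1 else 0 with he
  set V : ℕ → (Fin 3 → ℝ) := fun n i => fn n (e i) with hV
  set K : ℝ := N (e 0) + N (e 1) + N (e 2) with hK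
  have hVbound : ∀ n, V n ∈ Metric.closedBall (0 : Fin 3 → ℝ) K := by
    intro n
    rw [Metric.mem_closedBall, dist_zero_right]
    have h1 : ∀ i, ‖V n i‖ ≤ K := by
      intro i
      have hb := abs_f_le_N hN (hball n) (e i)
      rw [Real.norm_eq_abs]
      refine hb.trans ?_
      have h0 := hN.1 (e 0); have h1 := hN.1 (e 1); have h2 := hN.1 (e 2)
      fin_cases i
      · show N (e 0) ≤ K; linarith
      · show N (e 1) ≤ K; linarith
      · show N (e 2) ≤ K; linarith
    have hK0 : (0:ℝ) ≤ K := by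
      have h0 := hN.1 (e 0); have h1 := hN.1 (e 1); have h2 := hN.1 (e 2)
      simp only [hK]; linarith
    exact (pi_norm_le_iff_of_nonneg hK0).2 h1
  obtain ⟨F, _, φ, hφ, hFconv⟩ :=
    tendsto_subseq_of_bounded Metric.isBounded_closedBall hVbound
  refine ⟨φ, hφ, vecToLin F, ?_, ?_⟩
  · intro y hy
    have hconv : Tendsto (fun n => fn (φ n) y) atTop (𝓝 (vecToLin F y)) := by
      have : ∀ n, fn (φ n) y = vecToLin (V (φ n)) y := fun n => lin_eq_vecToLin _ y
      simp only [this, vecToLin_apply]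
      exact tendsto_finset_sum _ fun i _ =>
        tendsto_const_nhds.mul (((continuous_apply i).tendsto F).comp hFconv)
    exact le_of_tendsto hconv (Eventually.of_forall fun n => hball _ y hy)
  · intro y
    have : ∀ n, fn (φ n) y = vecToLin (V (φ n)) y := fun n => lin_eq_vecToLin _ y
    simp only [this, vecToLin_apply]
    exact tendsto_finset_sum _ fun i _ =>
      tendsto_const_nhds.mul (((continuous_apply i).tendsto F).comp hFconv)

end Aux3

namespace Aux4
open Aux Aux2 Aux3 Filter Topology

lemma linIndep {a b c : Fin 3 → ℝ} (habc : AffineIndependent ℝ ![a, b, c]) :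
    LinearIndependent ℝ ![a - b, b - c] := by
  have hkey := affineIndependent_iff.1 habc
  rw [linearIndependent_fin2]
  constructor
  · show b - c ≠ 0
    intro h
    have := hkey Finset.univ ![0, 1, -1] (by simp [Fin.sum_univ_three])
      (by simp [Fin.sum_univ_three]; rw [show b = c from by rwa [sub_eq_zero] at h]; abel)
    have h1 := this 1 (Finset.mem_univ _)
    simp at h1
  · intro s h
    simp only [Matrix.cons_val_one, Matrix.head_cons, Matrix.cons_val_zero] at h
    have hsum : Finset.univ.sum ![(1:ℝ), -1 - s, s] = 0 := by
      simp [Fin.sum_univ_three]; ring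
    have hcomb : ∑ e : Fin 3, (![(1:ℝ), -1 - s, s]) e • (![a, b, c]) e = 0 := by
      simp only [Fin.sum_univ_three, Matrix.cons_val_zero, Matrix.cons_val_one,
        Matrix.head_cons, Matrix.cons_val_two, Matrix.tail_cons]
      have expand : (1:ℝ) • a + (-1 - s) • b + s • c = (a - b) - s • (b - c) := by
        module
      rw [expand, h, sub_self]
    have := hkey Finset.univ ![(1:ℝ), -1 - s, s] hsum hcomb 0 (Finset.mem_univ _)
    simp at this

lemma direction_eq {π : AffineSubspace ℝ (Fin 3 → ℝ)}
    (hπ : Module.finrank ℝ π.direction = 2)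
    {a b c : Fin 3 → ℝ} (ha : a ∈ π) (hb : b ∈ π) (hc : c ∈ π)
    (habc : AffineIndependent ℝ ![a, b, c]) :
    Submodule.span ℝ (Set.range ![a - b, b - c]) = π.direction := by
  have hle : Submodule.span ℝ (Set.range ![a - b, b - c]) ≤ π.direction := by
    rw [Submodule.span_le]
    rintro w ⟨i, rfl⟩
    fin_cases i
    · show a - b ∈ π.direction
      simpa [vsub_eq_sub] using AffineSubspace.vsub_mem_direction ha hb
    · show b - c ∈ π.direction
      simpa [vsub_eq_sub] using AffineSubspace.vsub_mem_direction hb hc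
  have hrank : Module.finrank ℝ (Submodule.span ℝ (Set.range ![a - b, b - c])) = 2 := by
    rw [finrank_span_eq_card (linIndep habc)]
    simp
  exact Submodule.eq_of_le_of_finrank_le hle (by rw [hπ, hrank])

lemma vanish_on_direction {π : AffineSubspace ℝ (Fin 3 → ℝ)}
    (hπ : Module.finrank ℝ π.direction = 2)
    {a b c : Fin 3 → ℝ} (ha : a ∈ π) (hb : b ∈ π) (hc : c ∈ π)
    (habc : AffineIndependent ℝ ![a, b, c])
    {f : (Fin 3 → ℝ) →ₗ[ℝ] ℝ} (h1 : f (a - b) = 0) (h2 : f (b - c) = 0) :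
    ∀ w ∈ π.direction, f w = 0 := by
  intro w hw
  rw [← direction_eq hπ ha hb hc habc] at hw
  have hker : Submodule.span ℝ (Set.range ![a - b, b - c]) ≤ LinearMap.ker f := by
    rw [Submodule.span_le]
    rintro u ⟨i, rfl⟩
    fin_cases i
    · show a - b ∈ LinearMap.ker f
      simpa [LinearMap.mem_ker] using h1
    · show b - c ∈ LinearMap.ker f
      simpa [LinearMap.mem_ker] using h2
  exact hker hw

end Aux4

namespace Aux5
open Aux Aux2 Aux3 Aux4 Filter Topology

lemma key (N : (Fin 3 → ℝ) → ℝ) (hN : IsNorm N)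
    (hsm : IsSmoothNorm N) (hsc : IsStrictlyConvexNorm N)
    (π : AffineSubspace ℝ (Fin 3 → ℝ)) (hπ : Module.finrank ℝ π.direction = 2)
    (v : Fin 3 → ℝ)
    (a b c : Fin 3 → ℝ) (ha : a ∈ π) (hb : b ∈ π) (hc : c ∈ π)
    (habc : AffineIndependent ℝ ![a, b, c])
    (B : ℝ → Set (Fin 3 → ℝ))
    (hB : B = fun t => {x | N x ≤ 1} ∩ ((fun p => p + t • v) '' (π : Set (Fin 3 → ℝ))))
    (t₁ t₂ : ℝ)
    (ht : ∀ t : ℝ, t ∈ Set.Ioo t₁ t₂ ↔ ∃ x ∈ B t, ∃ y ∈ B t, x ≠ y)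
    (zr : ℝ → (Fin 3 → ℝ) × ℝ)
    (hzr : ∀ t ∈ Set.Ioo t₁ t₂, (zr t).1 ∈ π ∧ 0 < (zr t).2 ∧
      N ((zr t).1 + (zr t).2 • a + t • v) = 1 ∧
      N ((zr t).1 + (zr t).2 • b + t • v) = 1 ∧
      N ((zr t).1 + (zr t).2 • c + t • v) = 1)
    (huniq : ∀ t ∈ Set.Ioo t₁ t₂, ∀ (z : Fin 3 → ℝ) (r : ℝ), z ∈ π → 0 < r →
      N (z + r • a + t • v) = 1 → N (z + r • b + t • v) = 1 →
      N (z + r • c + t • v) = 1 → (z, r) = zr t)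
    (t₀ : ℝ) (ht₀ : t₀ ∈ Set.Ioo t₁ t₂)
    (u : ℕ → ℝ) (hu1 : ∀ n, u n ∈ Set.Ioo t₁ t₂)
    (hu2 : Tendsto u atTop (𝓝 t₀)) :
    ∃ φ : ℕ → ℕ, StrictMono φ ∧
      Tendsto (fun n => zr (u (φ n))) atTop (𝓝 (zr t₀)) := by
  obtain ⟨c₀, hc₀, hlow⟩ := norm_lower hN
  have hNc := norm_cont hN
  set Z : ℕ → Fin 3 → ℝ := fun n => (zr (u n)).1 with hZ
  set R : ℕ → ℝ := fun n => (zr (u n)).2 with hR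
  have hprop := fun n => hzr (u n) (hu1 n)
  have hRpos : ∀ n, 0 < R n := fun n => (hprop n).2.1
  have hNA : ∀ n, N (Z n + R n • a + u n • v) = 1 := fun n => (hprop n).2.2.1
  have hNB : ∀ n, N (Z n + R n • b + u n • v) = 1 := fun n => (hprop n).2.2.2.1
  have hNC : ∀ n, N (Z n + R n • c + u n • v) = 1 := fun n => (hprop n).2.2.2.2
  have hZπ : ∀ n, Z n ∈ π := fun n => (hprop n).1
  have hnorm1 : ∀ x : Fin 3 → ℝ, N x = 1 → ‖x‖ ≤ 1 / c₀ := by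
    intro x hx
    have := hlow x
    rw [hx] at this
    rw [le_div_iff₀ hc₀]
    linarith [mul_comm c₀ ‖x‖]
  have hnormA : ∀ n, ‖Z n + R n • a + u n • v‖ ≤ 1 / c₀ := fun n => hnorm1 _ (hNA n)
  have hnormB : ∀ n, ‖Z n + R n • b + u n • v‖ ≤ 1 / c₀ := fun n => hnorm1 _ (hNB n)
  have hab : a ≠ b := by
    intro h
    have h2 : (![a, b, c] : Fin 3 → Fin 3 → ℝ) 0 = ![a, b, c] 1 := by simpa using h
    have := habc.injective h2
    simp at this
  have habn : 0 < ‖a - b‖ := norm_pos_iff.2 (sub_ne_zero.2 hab)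
  set KR : ℝ := 2 / (c₀ * ‖a - b‖) with hKRdef
  have hRle : ∀ n, R n ≤ KR := by
    intro n
    have hdiff : (Z n + R n • a + u n • v) - (Z n + R n • b + u n • v)
        = R n • (a - b) := by rw [smul_sub]; abel
    have h1 : ‖R n • (a - b)‖ ≤ 2 / c₀ := by
      rw [← hdiff]
      calc ‖(Z n + R n • a + u n • v) - (Z n + R n • b + u n • v)‖
          ≤ ‖Z n + R n • a + u n • v‖ + ‖Z n + R n • b + u n • v‖ := norm_sub_le _ _
      _ ≤ 1 / c₀ + 1 / c₀ := add_le_add (hnormA n) (hnormB n)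
      _ = 2 / c₀ := by ring
    rw [norm_smul, Real.norm_eq_abs, abs_of_pos (hRpos n)] at h1
    rw [hKRdef, le_div_iff₀ (mul_pos hc₀ habn)]
    have h2 : (2 / c₀) * c₀ = 2 := by field_simp
    nlinarith [hRpos n]
  set T : ℝ := max |t₁| |t₂| with hT
  have huabs : ∀ n, |u n| ≤ T := by
    intro n
    obtain ⟨h1, h2⟩ := hu1 n
    rw [abs_le]
    constructor
    · calc -T ≤ -|t₁| := neg_le_neg (le_max_left _ _)
      _ ≤ t₁ := neg_abs_le t₁
      _ ≤ u n := h1.le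
    · exact h2.le.trans ((le_abs_self t₂).trans (le_max_right _ _))
  have hZle : ∀ n, ‖Z n‖ ≤ 1 / c₀ + KR * ‖a‖ + T * ‖v‖ := by
    intro n
    have heq : Z n = (Z n + R n • a + u n • v) - R n • a - u n • v := by abel
    have h1 := hnormA n
    have h2 : ‖R n • a‖ ≤ KR * ‖a‖ := by
      rw [norm_smul, Real.norm_eq_abs, abs_of_pos (hRpos n)]
      exact mul_le_mul_of_nonneg_right (hRle n) (norm_nonneg a)
    have h3 : ‖u n • v‖ ≤ T * ‖v‖ := by
      rw [norm_smul, Real.norm_eq_abs]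
      exact mul_le_mul_of_nonneg_right (huabs n) (norm_nonneg v)
    calc ‖Z n‖ = ‖(Z n + R n • a + u n • v) - R n • a - u n • v‖ := by rw [← heq]
    _ ≤ ‖(Z n + R n • a + u n • v) - R n • a‖ + ‖u n • v‖ := norm_sub_le _ _
    _ ≤ ‖Z n + R n • a + u n • v‖ + ‖R n • a‖ + ‖u n • v‖ := by
        linarith [norm_sub_le (Z n + R n • a + u n • v) (R n • a)]
    _ ≤ 1 / c₀ + KR * ‖a‖ + T * ‖v‖ := by linarith
  set K : ℝ := max (1 / c₀ + KR * ‖a‖ + T * ‖v‖) KR with hK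
  have hmem : ∀ n, zr (u n) ∈ Metric.closedBall (0 : (Fin 3 → ℝ) × ℝ) K := by
    intro n
    rw [Metric.mem_closedBall, dist_zero_right, Prod.norm_def]
    apply max_le
    · exact (hZle n).trans (le_max_left _ _)
    · rw [Real.norm_eq_abs, abs_of_pos (hRpos n)]
      exact (hRle n).trans (le_max_right _ _)
  obtain ⟨L, _, φ, hφ, hL⟩ :=
    tendsto_subseq_of_bounded Metric.isBounded_closedBall hmem
  have hzlim : Tendsto (fun n => Z (φ n)) atTop (𝓝 L.1) :=
    (continuous_fst.tendsto L).comp hL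
  have hrlim : Tendsto (fun n => R (φ n)) atTop (𝓝 L.2) :=
    (continuous_snd.tendsto L).comp hL
  have hulim : Tendsto (fun n => u (φ n)) atTop (𝓝 t₀) := hu2.comp hφ.tendsto_atTop
  have hxlim : ∀ w : Fin 3 → ℝ,
      Tendsto (fun n => Z (φ n) + R (φ n) • w + u (φ n) • v) atTop
        (𝓝 (L.1 + L.2 • w + t₀ • v)) := fun w =>
    (hzlim.add (hrlim.smul_const w)).add (hulim.smul_const v)
  have hNlim : ∀ w : Fin 3 → ℝ, (∀ n, N (Z n + R n • w + u n • v) = 1) →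
      N (L.1 + L.2 • w + t₀ • v) = 1 := by
    intro w hw
    have h1 : Tendsto (fun n => N (Z (φ n) + R (φ n) • w + u (φ n) • v)) atTop
        (𝓝 (N (L.1 + L.2 • w + t₀ • v))) := (hNc.tendsto _).comp (hxlim w)
    have h2 : (fun n => N (Z (φ n) + R (φ n) • w + u (φ n) • v)) = fun _ => (1:ℝ) :=
      funext fun n => hw (φ n)
    rw [h2] at h1
    exact tendsto_nhds_unique h1 tendsto_const_nhds
  have hNA' := hNlim a hNA
  have hNB' := hNlim b hNB
  have hNC' := hNlim c hNC
  have hclosed : IsClosed (π : Set (Fin 3 → ℝ)) := π.closed_of_finiteDimensional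
  have hLπ : L.1 ∈ π :=
    hclosed.mem_of_tendsto hzlim (Eventually.of_forall fun n => hZπ (φ n))
  have hL2 : 0 ≤ L.2 :=
    ge_of_tendsto hrlim (Eventually.of_forall fun n => (hRpos (φ n)).le)
  rcases hL2.lt_or_eq with hLpos | hzero
  · have heq := huniq t₀ ht₀ L.1 L.2 hLπ hLpos hNA' hNB' hNC'
    have hLeq : L = zr t₀ := by rw [← heq]
    exact ⟨φ, hφ, hLeq ▸ hL⟩
  · exfalso
    set p : Fin 3 → ℝ := L.1 + t₀ • v with hp
    have hplim : L.1 + L.2 • a + t₀ • v = p ∧ L.1 + L.2 • b + t₀ • v = p ∧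
        L.1 + L.2 • c + t₀ • v = p := by
      refine ⟨?_, ?_, ?_⟩ <;> rw [← hzero, zero_smul, add_zero]
    have hNp : N p = 1 := by rw [← hplim.1]; exact hNA'
    choose fA hfA1 hfA2 using fun n => support_exists hN _ (hNA (φ n))
    choose fB hfB1 hfB2 using fun n => support_exists hN _ (hNB (φ n))
    choose fC hfC1 hfC2 using fun n => support_exists hN _ (hNC (φ n))
    obtain ⟨ψ₁, hψ₁, FA, hFAball, hFAconv⟩ := functional_limit hN fA hfA2
    obtain ⟨ψ₂, hψ₂, FB, hFBball, hFBconv⟩ :=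
      functional_limit hN (fun n => fB (ψ₁ n)) (fun n => hfB2 (ψ₁ n))
    obtain ⟨ψ₃, hψ₃, FC, hFCball, hFCconv⟩ :=
      functional_limit hN (fun n => fC (ψ₁ (ψ₂ n))) (fun n => hfC2 _)
    set σ : ℕ → ℕ := fun n => ψ₁ (ψ₂ (ψ₃ n)) with hσ
    have hσmono : StrictMono σ := hψ₁.comp (hψ₂.comp hψ₃)
    have hAconv : ∀ y, Tendsto (fun n => fA (σ n) y) atTop (𝓝 (FA y)) := fun y =>
      (hFAconv y).comp (hψ₂.comp hψ₃).tendsto_atTop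
    have hBconv : ∀ y, Tendsto (fun n => fB (σ n) y) atTop (𝓝 (FB y)) := fun y =>
      (hFBconv y).comp hψ₃.tendsto_atTop
    have hCconv : ∀ y, Tendsto (fun n => fC (σ n) y) atTop (𝓝 (FC y)) := hFCconv
    have hN0 : N 0 = 0 := (hN.2.1 0).2 rfl
    -- generic "value at p is 1" claim
    have hptlim : ∀ (F : (Fin 3 → ℝ) →ₗ[ℝ] ℝ) (g : ℕ → (Fin 3 → ℝ) →ₗ[ℝ] ℝ)
        (w : Fin 3 → ℝ),
        (∀ n, g n (Z (φ (σ n)) + R (φ (σ n)) • w + u (φ (σ n)) • v) = 1) →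
        (∀ n y, N y ≤ 1 → g n y ≤ 1) →
        (∀ y, Tendsto (fun n => g n y) atTop (𝓝 (F y))) → F p = 1 := by
      intro F g w hg1 hgball hgconv
      set x : ℕ → Fin 3 → ℝ :=
        fun n => Z (φ (σ n)) + R (φ (σ n)) • w + u (φ (σ n)) • v with hx
      have hxp : Tendsto x atTop (𝓝 p) := by
        have h1 : Tendsto (fun n => Z (φ n) + R (φ n) • w + u (φ n) • v) atTop
            (𝓝 (L.1 + L.2 • w + t₀ • v)) := hxlim w
        have h2 : L.1 + L.2 • w + t₀ • v = p := by rw [← hzero, zero_smul, add_zero]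
        rw [h2] at h1
        exact h1.comp hσmono.tendsto_atTop
      have hterm2 : Tendsto (fun n => g n (x n - p)) atTop (𝓝 0) := by
        refine squeeze_zero_norm (a := fun n => N (x n - p)) ?_ ?_
        · intro n
          rw [Real.norm_eq_abs]
          exact abs_f_le_N hN (hgball n) (x n - p)
        · have h3 : Tendsto (fun n => x n - p) atTop (𝓝 (p - p)) :=
            hxp.sub tendsto_const_nhds
          rw [sub_self] at h3
          have h4 := (hNc.tendsto 0).comp h3
          rwa [hN0] at h4
      have hterm1 : Tendsto (fun n => g n p) atTop (𝓝 (F p)) := hgconv p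
      have hsum : Tendsto (fun n => g n p + g n (x n - p)) atTop (𝓝 (F p + 0)) :=
        hterm1.add hterm2
      have heqf : (fun n => g n p + g n (x n - p)) = fun _ => (1:ℝ) := by
        funext n
        rw [← map_add]
        have : p + (x n - p) = x n := by abel
        rw [this]
        exact hg1 n
      rw [heqf] at hsum
      have := tendsto_nhds_unique hsum tendsto_const_nhds
      linarith
    have hFAp : FA p = 1 :=
      hptlim FA (fun n => fA (σ n)) a (fun n => hfA1 (σ n)) (fun n => hfA2 (σ n)) hAconv
    have hFBp : FB p = 1 :=
      hptlim FB (fun n => fB (σ n)) b (fun n => hfB1 (σ n)) (fun n => hfB2 (σ n)) hBconv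
    have hFCp : FC p = 1 :=
      hptlim FC (fun n => fC (σ n)) c (fun n => hfC1 (σ n)) (fun n => hfC2 (σ n)) hCconv
    -- sign facts
    have hsign : ∀ (g : (Fin 3 → ℝ) →ₗ[ℝ] ℝ) (k : ℕ) (w w' : Fin 3 → ℝ),
        g (Z (φ k) + R (φ k) • w + u (φ k) • v) = 1 →
        g (Z (φ k) + R (φ k) • w' + u (φ k) • v) ≤ 1 → 0 ≤ g (w - w') := by
      intro g k w w' h1 h2
      have h3 : (Z (φ k) + R (φ k) • w + u (φ k) • v)
          - (Z (φ k) + R (φ k) • w' + u (φ k) • v) = R (φ k) • (w - w') := by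
        rw [smul_sub]; abel
      have h4 : R (φ k) * g (w - w') =
          g (Z (φ k) + R (φ k) • w + u (φ k) • v)
          - g (Z (φ k) + R (φ k) • w' + u (φ k) • v) := by
        rw [← map_sub, h3, map_smul, smul_eq_mul]
      by_contra hcon
      push_neg at hcon
      have h5 : R (φ k) * g (w - w') < 0 := mul_neg_of_pos_of_neg (hRpos (φ k)) hcon
      rw [h4] at h5
      linarith
    have hsA : 0 ≤ FA (a - b) :=
      ge_of_tendsto (hAconv (a - b)) (Eventually.of_forall fun n =>
        hsign (fA (σ n)) (σ n) a b (hfA1 (σ n)) (hfA2 (σ n) _ (hNB (φ (σ n))).le))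
    have hsB1 : 0 ≤ FB (b - a) :=
      ge_of_tendsto (hBconv (b - a)) (Eventually.of_forall fun n =>
        hsign (fB (σ n)) (σ n) b a (hfB1 (σ n)) (hfB2 (σ n) _ (hNA (φ (σ n))).le))
    have hsB2 : 0 ≤ FB (b - c) :=
      ge_of_tendsto (hBconv (b - c)) (Eventually.of_forall fun n =>
        hsign (fB (σ n)) (σ n) b c (hfB1 (σ n)) (hfB2 (σ n) _ (hNC (φ (σ n))).le))
    have hsC : 0 ≤ FC (c - b) :=
      ge_of_tendsto (hCconv (c - b)) (Eventually.of_forall fun n =>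
        hsign (fC (σ n)) (σ n) c b (hfC1 (σ n)) (hfC2 (σ n) _ (hNB (φ (σ n))).le))
    -- uniqueness of supporting functional at p
    obtain ⟨F₀, hF₀P, hFuniq⟩ := hsm p hNp
    have hFA0 : FA = F₀ := hFuniq FA ⟨hFAp, hFAball⟩
    have hFB0 : FB = F₀ := hFuniq FB ⟨hFBp, hFBball⟩
    have hFC0 : FC = F₀ := hFuniq FC ⟨hFCp, hFCball⟩
    have hab0 : F₀ (a - b) = 0 := by
      have h1 : 0 ≤ F₀ (a - b) := hFA0 ▸ hsA
      have h2 : 0 ≤ F₀ (b - a) := hFB0 ▸ hsB1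
      have h3 : F₀ (b - a) = - F₀ (a - b) := by
        rw [← map_neg]; congr 1; abel
      linarith
    have hbc0 : F₀ (b - c) = 0 := by
      have h1 : 0 ≤ F₀ (b - c) := hFB0 ▸ hsB2
      have h2 : 0 ≤ F₀ (c - b) := hFC0 ▸ hsC
      have h3 : F₀ (c - b) = - F₀ (b - c) := by
        rw [← map_neg]; congr 1; abel
      linarith
    have hvan := vanish_on_direction hπ ha hb hc habc hab0 hbc0
    -- two distinct points of B t₀
    obtain ⟨X, hX, Y, hY, hXY⟩ := (ht t₀).1 ht₀
    rw [hB] at hX hY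
    obtain ⟨hXN, x', hx'π, rfl⟩ := hX
    obtain ⟨hYN, y', hy'π, rfl⟩ := hY
    have hdirX : x' + t₀ • v - p ∈ π.direction := by
      have h1 := AffineSubspace.vsub_mem_direction hx'π hLπ
      rw [vsub_eq_sub] at h1
      have h2 : x' + t₀ • v - p = x' - L.1 := by rw [hp]; abel
      rwa [h2]
    have hdirY : y' + t₀ • v - p ∈ π.direction := by
      have h1 := AffineSubspace.vsub_mem_direction hy'π hLπ
      rw [vsub_eq_sub] at h1
      have h2 : y' + t₀ • v - p = y' - L.1 := by rw [hp]; abel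
      rwa [h2]
    have hval : ∀ w : Fin 3 → ℝ, w - p ∈ π.direction → F₀ w = 1 := by
      intro w hw
      have h0 := hvan _ hw
      rw [map_sub] at h0
      have := hF₀P.1
      linarith
    have hF₀X : F₀ (x' + t₀ • v) = 1 := hval _ hdirX
    have hF₀Y : F₀ (y' + t₀ • v) = 1 := hval _ hdirY
    have hNX : N (x' + t₀ • v) = 1 := by
      have h1 := f_le_N hN hF₀P.2 (x' + t₀ • v)
      have h2 : N (x' + t₀ • v) ≤ 1 := hXN
      rw [hF₀X] at h1
      linarith
    have hNY : N (y' + t₀ • v) = 1 := by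
      have h1 := f_le_N hN hF₀P.2 (y' + t₀ • v)
      have h2 : N (y' + t₀ • v) ≤ 1 := hYN
      rw [hF₀Y] at h1
      linarith
    have hmid := hsc _ _ hNX hNY hXY
    have hmid1 : F₀ ((1 / 2 : ℝ) • ((x' + t₀ • v) + (y' + t₀ • v))) = 1 := by
      rw [map_smul, map_add, hF₀X, hF₀Y]
      norm_num
    have hmid2 := f_le_N hN hF₀P.2 ((1 / 2 : ℝ) • ((x' + t₀ • v) + (y' + t₀ • v)))
    rw [hmid1] at hmid2
    linarith

end Aux5


open Filter Topology

theorem continuity_of_inscribed_homothets (N : (Fin 3 → ℝ) → ℝ) (hN : IsNorm N)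
    (hsm : IsSmoothNorm N) (hsc : IsStrictlyConvexNorm N)
    (π : AffineSubspace ℝ (Fin 3 → ℝ)) (hπ : Module.finrank ℝ π.direction = 2)
    (v : Fin 3 → ℝ) (hv : N v = 1) (hvπ : v ∉ π.direction)
    (a b c : Fin 3 → ℝ) (ha : a ∈ π) (hb : b ∈ π) (hc : c ∈ π)
    (habc : AffineIndependent ℝ ![a, b, c])
    (B : ℝ → Set (Fin 3 → ℝ))
    (hB : B = fun t => {x | N x ≤ 1} ∩ ((fun p => p + t • v) '' (π : Set (Fin 3 → ℝ))))
    (t₁ t₂ : ℝ)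
    (ht : ∀ t : ℝ, t ∈ Set.Ioo t₁ t₂ ↔ ∃ x ∈ B t, ∃ y ∈ B t, x ≠ y)
    (zr : ℝ → (Fin 3 → ℝ) × ℝ)
    (hzr : ∀ t ∈ Set.Ioo t₁ t₂, (zr t).1 ∈ π ∧ 0 < (zr t).2 ∧
      N ((zr t).1 + (zr t).2 • a + t • v) = 1 ∧
      N ((zr t).1 + (zr t).2 • b + t • v) = 1 ∧
      N ((zr t).1 + (zr t).2 • c + t • v) = 1)
    (huniq : ∀ t ∈ Set.Ioo t₁ t₂, ∀ (z : Fin 3 → ℝ) (r : ℝ), z ∈ π → 0 < r →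
      N (z + r • a + t • v) = 1 → N (z + r • b + t • v) = 1 →
      N (z + r • c + t • v) = 1 → (z, r) = zr t) :
    ContinuousOn zr (Set.Ioo t₁ t₂) := by
  apply continuousOn_of_forall_continuousAt
  intro t₀ ht₀
  have htend : Tendsto zr (𝓝 t₀) (𝓝 (zr t₀)) := by
    apply tendsto_of_subseq_tendsto
    intro ns hns
    have hev : ∀ᶠ n in atTop, ns n ∈ Set.Ioo t₁ t₂ :=
      hns.eventually (isOpen_Ioo.mem_nhds ht₀)
    obtain ⟨M, hM⟩ := Filter.eventually_atTop.1 hev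
    obtain ⟨φ, hφ, hconv⟩ := Aux5.key N hN hsm hsc π hπ v a b c ha hb hc habc B hB
      t₁ t₂ ht zr hzr huniq t₀ ht₀ (fun n => ns (n + M))
      (fun n => hM _ (Nat.le_add_left M n))
      (hns.comp (tendsto_add_atTop_nat M))
    exact ⟨fun n => φ n + M, hconv⟩
  exact htend
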